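/- Let A ∈ ℝ^{n×n} and u ∈ ℝ^n, and let Ã ∈ ℝ^{(n+1)×(n+1)} be the block matrix whose upper-left n×n block is A, whose last column has u as its first n entries and 0 as its last entry, and whose last row is zero. Then for every t ∈ ℝ, the first n components of exp(Ã t) e_{n+1} equal (∫_0^t exp(A s) ds) u and the last component of exp(Ã t) e_{n+1} equals 1. -/

import Mathlib

open Matrix

/-- Matrix exponential of a real square matrix. -/
noncomputable def mexp {m : ℕ} (A : Matrix (Fin m) (Fin m) ℝ) : Matrix (Fin m) (Fin m) ℝ :=
  NormedSpace.exp A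

/-- The augmented matrix `Ã = [[A, u], [0, 0]]`. -/
def aug {n : ℕ} (A : Matrix (Fin n) (Fin n) ℝ) (u : Fin n → ℝ) :
    Matrix (Fin (n + 1)) (Fin (n + 1)) ℝ :=
  Matrix.of fun i j =>
    Fin.lastCases 0 (fun i' => Fin.lastCases (u i') (fun j' => A i' j') j) i

/-- The entrywise integral `∫_0^t exp(A s) ds`. -/
noncomputable def intExp {n : ℕ} (A : Matrix (Fin n) (Fin n) ℝ) (t : ℝ) :
    Matrix (Fin n) (Fin n) ℝ :=
  Matrix.of fun i j => ∫ s in (0 : ℝ)..t, mexp (s • A) i j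

attribute [local instance] Matrix.linftyOpSemiNormedRing Matrix.linftyOpNormedRing
  Matrix.linftyOpNormedAlgebra

-- aug entry lemmas
@[simp] lemma aug_last_row {n : ℕ} (A : Matrix (Fin n) (Fin n) ℝ) (u : Fin n → ℝ)
    (j : Fin (n+1)) : aug A u (Fin.last n) j = 0 := by
  simp [aug]

@[simp] lemma aug_cs_last {n : ℕ} (A : Matrix (Fin n) (Fin n) ℝ) (u : Fin n → ℝ)
    (i : Fin n) : aug A u i.castSucc (Fin.last n) = u i := by
  simp [aug]

@[simp] lemma aug_cs_cs {n : ℕ} (A : Matrix (Fin n) (Fin n) ℝ) (u : Fin n → ℝ)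
    (i j : Fin n) : aug A u i.castSucc j.castSucc = A i j := by
  simp [aug]

lemma smul_aug {n : ℕ} (t : ℝ) (A : Matrix (Fin n) (Fin n) ℝ) (u : Fin n → ℝ) :
    t • aug A u = aug (t • A) (t • u) := by
  ext i j
  induction i using Fin.lastCases with
  | last => simp
  | cast i =>
    induction j using Fin.lastCases with
    | last => simp
    | cast j => simp

lemma aug_mul_aug {n : ℕ} (A B : Matrix (Fin n) (Fin n) ℝ) (u v : Fin n → ℝ) :
    aug A u * aug B v = aug (A * B) (A *ᵥ v) := by
  ext i j
  induction i using Fin.lastCases with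
  | last => simp [mul_apply]
  | cast i =>
    induction j using Fin.lastCases with
    | last =>
      simp [mul_apply, Fin.sum_univ_castSucc, mulVec, dotProduct]
    | cast j =>
      simp [mul_apply, Fin.sum_univ_castSucc]

lemma aug_pow {n : ℕ} (A : Matrix (Fin n) (Fin n) ℝ) (u : Fin n → ℝ) (k : ℕ) :
    aug A u ^ (k + 1) = aug (A ^ (k + 1)) (A ^ k *ᵥ u) := by
  induction k with
  | zero => simp
  | succ k ih =>
    rw [pow_succ', ih, aug_mul_aug, ← pow_succ', mulVec_mulVec, ← pow_succ']

noncomputable def entryCLM {m : ℕ} (i j : Fin m) :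
    Matrix (Fin m) (Fin m) ℝ →L[ℝ] ℝ :=
  LinearMap.toContinuousLinearMap
    ((LinearMap.proj j).comp (LinearMap.proj (R := ℝ) (φ := fun _ : Fin m => Fin m → ℝ) i))

@[simp] lemma entryCLM_apply {m : ℕ} (i j : Fin m) (M : Matrix (Fin m) (Fin m) ℝ) :
    entryCLM i j M = M i j := rfl

lemma mexp_entry_tsum {m : ℕ} (M : Matrix (Fin m) (Fin m) ℝ) (i j : Fin m) :
    mexp M i j = ∑' k : ℕ, ((k.factorial : ℝ)⁻¹ • M ^ k) i j := by
  have hs : Summable fun k : ℕ => ((k.factorial : ℝ)⁻¹ • M ^ k) :=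
    NormedSpace.expSeries_summable' (𝕂 := ℝ) M
  rw [mexp, NormedSpace.exp_eq_tsum (𝕂 := ℝ)]
  exact (entryCLM i j).map_tsum hs

lemma mexp_aug_block {n : ℕ} (A : Matrix (Fin n) (Fin n) ℝ) (u : Fin n → ℝ) (i j : Fin n) :
    mexp (aug A u) i.castSucc j.castSucc = mexp A i j := by
  rw [mexp_entry_tsum, mexp_entry_tsum]
  refine tsum_congr fun k => ?_
  cases k with
  | zero => simp [one_apply, Fin.castSucc_inj]
  | succ k => rw [aug_pow]; simp

lemma mexp_aug_last_last {n : ℕ} (A : Matrix (Fin n) (Fin n) ℝ) (u : Fin n → ℝ) :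
    mexp (aug A u) (Fin.last n) (Fin.last n) = 1 := by
  rw [mexp_entry_tsum]
  rw [tsum_eq_single 0]
  · simp [one_apply]
  · intro k hk
    obtain ⟨k, rfl⟩ := Nat.exists_eq_succ_of_ne_zero hk
    rw [aug_pow]; simp


/-- the first `n` components of `exp(Ã t) e_{n+1}` equal
`(∫_0^t exp(A s) ds) u`, and its last component equals `1`. -/
theorem stmt11 {n : ℕ} (A : Matrix (Fin n) (Fin n) ℝ) (u : Fin n → ℝ) (t : ℝ) :
    (∀ i : Fin n,
      (mexp (t • aug A u) *ᵥ Pi.single (Fin.last n) 1) i.castSucc = (intExp A t *ᵥ u) i) ∧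
    (mexp (t • aug A u) *ᵥ Pi.single (Fin.last n) 1) (Fin.last n) = 1 := by
  have hsingle : ∀ (M : Matrix (Fin (n+1)) (Fin (n+1)) ℝ) (i : Fin (n+1)),
      (M *ᵥ Pi.single (Fin.last n) 1) i = M i (Fin.last n) := by
    intro M i
    simp [mulVec, dotProduct, Pi.single_apply]
  constructor
  · intro i
    rw [hsingle]
    -- continuity of the integrand entries
    have hcont : ∀ (j j' : Fin n), Continuous fun s : ℝ => mexp (s • A) j j' := by
      intro j j'
      have h1 : Continuous fun s : ℝ => NormedSpace.exp (s • A) :=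
        NormedSpace.exp_continuous.comp (continuous_id.smul continuous_const)
      exact ((continuous_apply j').comp ((continuous_apply j).comp h1))
    have hg : Continuous fun s : ℝ => (mexp (s • A) *ᵥ u) i := by
      simp only [mulVec, dotProduct]
      exact continuous_finset_sum _ fun j _ => (hcont i j).mul continuous_const
    -- RHS as a single integral
    have hRHS : ∀ r : ℝ, (intExp A r *ᵥ u) i = ∫ s in (0:ℝ)..r, (mexp (s • A) *ᵥ u) i := by
      intro r
      simp only [intExp, mulVec, dotProduct, of_apply]
      rw [intervalIntegral.integral_finset_sum]
      · exact Finset.sum_congr rfl fun j _ => (intervalIntegral.integral_mul_const _ _).symm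
      · intro j _
        exact ((hcont i j).mul continuous_const).intervalIntegrable _ _
    -- define F and G
    set F : ℝ → ℝ := fun r => mexp (r • aug A u) i.castSucc (Fin.last n) with hF
    set G : ℝ → ℝ := fun r => (intExp A r *ᵥ u) i with hG
    have hFderiv : ∀ r : ℝ, HasDerivAt F ((mexp (r • A) *ᵥ u) i) r := by
      intro r
      have h := hasDerivAt_exp_smul_const (𝕂 := ℝ) (aug A u) r
      have h2 := (entryCLM i.castSucc (Fin.last n)).hasFDerivAt.comp_hasDerivAt r h
      have h3 : (entryCLM i.castSucc (Fin.last n)) (NormedSpace.exp (r • aug A u) * aug A u)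
          = (mexp (r • A) *ᵥ u) i := by
        rw [entryCLM_apply, mul_apply, Fin.sum_univ_castSucc]
        simp only [aug_cs_last, aug_last_row, mul_zero, add_zero]
        have : ∀ j : Fin n, NormedSpace.exp (r • aug A u) i.castSucc j.castSucc
            = mexp (r • A) i j := by
          intro j
          have := mexp_aug_block (r • A) (r • u) i j
          rwa [← smul_aug] at this
        simp only [mulVec, dotProduct]
        exact Finset.sum_congr rfl fun j _ => by rw [this j]
      replace h2 := h2.congr_deriv h3
      exact h2
    have hGderiv : ∀ r : ℝ, HasDerivAt G ((mexp (r • A) *ᵥ u) i) r := by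
      intro r
      have : HasDerivAt (fun x : ℝ => ∫ s in (0:ℝ)..x, (mexp (s • A) *ᵥ u) i)
          ((mexp (r • A) *ᵥ u) i) r := by
        exact intervalIntegral.integral_hasDerivAt_right
          (hg.intervalIntegrable _ _)
          (hg.stronglyMeasurableAtFilter _ _)
          hg.continuousAt
      have hGe : G = fun x : ℝ => ∫ s in (0:ℝ)..x, (mexp (s • A) *ᵥ u) i := funext hRHS
      rw [hGe]
      exact this
    -- F and G agree: same derivative, same value at 0
    have h0 : F 0 = G 0 := by
      have hF0 : F 0 = 0 := by
        simp only [hF, zero_smul, mexp, NormedSpace.exp_zero]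
        exact one_apply_ne (Fin.castSucc_lt_last i).ne
      have hG0 : G 0 = 0 := by
        show (intExp A 0 *ᵥ u) i = 0
        rw [hRHS 0]; simp
      rw [hF0, hG0]
    have key : ∀ r, F r = G r := by
      intro r
      have hdiff : Differentiable ℝ (F - G) := fun x =>
        ((hFderiv x).sub (hGderiv x)).differentiableAt
      have hderiv0 : ∀ x, deriv (F - G) x = 0 := fun x =>
        (((hFderiv x).sub (hGderiv x)).deriv).trans (sub_self _)
      have := is_const_of_deriv_eq_zero hdiff hderiv0 r 0
      have h2 : F r - G r = F 0 - G 0 := this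
      linarith [h2, h0]
    exact key t
  · rw [hsingle, smul_aug, mexp_aug_last_last]
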